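/- For all n ≥ 2, the ratio of consecutive Apéry numbers satisfies A_n / A_{n-1} ≥ (33n^3 - 48n^2 + 24n - 4)/n^3. -/

import Mathlib

/-- The Apéry numbers `A_n = Σ_{k=0}^n C(n,k)^2 C(n+k,k)^2`. -/
def aperyA (n : ℕ) : ℕ :=
  ∑ k ∈ Finset.range (n + 1), (Nat.choose n k) ^ 2 * (Nat.choose (n + k) k) ^ 2

/-- Real-valued summand of the Apéry numbers. -/
noncomputable def Fr (n k : ℕ) : ℝ :=
  ((n.choose k : ℝ)) ^ 2 * (((n + k).choose k : ℝ)) ^ 2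

/-- Zeilberger certificate for the Apéry recurrence. -/
noncomputable def Br (m k : ℕ) : ℝ :=
  4 * (2 * (m : ℝ) + 1) * ((k : ℝ) * (2 * (k : ℝ) + 1) - (2 * (m : ℝ) + 1) ^ 2) *
    ((m.choose k : ℝ)) ^ 2 * (((m + k).choose k : ℝ)) ^ 2

/-- Shifted certificate used for telescoping. -/
noncomputable def Hm (m : ℕ) : ℕ → ℝ
  | 0 => 0
  | (j + 1) => Br m j

lemma aperyA_cast (n : ℕ) : (aperyA n : ℝ) = ∑ k ∈ Finset.range (n + 1), Fr n k := by
  unfold aperyA Fr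
  push_cast
  ring

lemma perk (M k : ℕ) (hk : k ≤ M + 2) :
    ((M : ℝ) + 2) ^ 3 * Fr (M + 2) k
      - (34 * ((M : ℝ) + 2) ^ 3 - 51 * ((M : ℝ) + 2) ^ 2 + 27 * ((M : ℝ) + 2) - 5) * Fr (M + 1) k
      + ((M : ℝ) + 1) ^ 3 * Fr M k
    = Hm (M + 1) (k + 1) - Hm (M + 1) k := by
  rcases Nat.eq_zero_or_pos k with rfl | hk0
  · simp only [Fr, Br, Hm, Nat.choose_zero_right, Nat.add_zero]
    push_cast
    ring
  obtain ⟨j, rfl⟩ : ∃ j, k = j + 1 := ⟨k - 1, by omega⟩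
  rcases eq_or_lt_of_le hk with he | hlt
  · -- boundary case k = M + 2
    obtain rfl : j = M + 1 := by omega
    rw [show M + 1 + 1 = M + 2 from by omega]
    have h := Nat.succ_mul_centralBinom_succ (M + 1)
    unfold Nat.centralBinom at h
    have h' : ((M : ℝ) + 2) * ((2 * (M + 2)).choose (M + 2) : ℝ)
        = 2 * (2 * (M : ℝ) + 3) * ((2 * (M + 1)).choose (M + 1) : ℝ) := by
      exact_mod_cast h
    simp only [Fr, Br, Hm]
    rw [show (M + 2) + (M + 2) = 2 * (M + 2) from by ring,
        show (M + 1) + (M + 1) = 2 * (M + 1) from by ring,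
        Nat.choose_eq_zero_of_lt (by omega : M + 1 < M + 2),
        Nat.choose_eq_zero_of_lt (by omega : M < M + 2)]
    simp only [Nat.choose_self]
    push_cast
    linear_combination (((M : ℝ) + 2) * ((2 * (M + 2)).choose (M + 2) : ℝ)
      + 2 * (2 * (M : ℝ) + 3) * ((2 * (M + 1)).choose (M + 1) : ℝ)) * ((M : ℝ) + 2) * h'
  · -- interior case 1 ≤ k ≤ M + 1
    obtain ⟨d, rfl⟩ : ∃ d, M = j + d := ⟨M - j, by omega⟩
    -- ℕ facts
    have hA := Nat.choose_mul_succ_eq (j + d + 1) (j + 1)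
    rw [show j + d + 1 + 1 - (j + 1) = d + 1 from by omega,
        show j + d + 1 + 1 = j + d + 2 from by omega] at hA
    have hB := Nat.choose_mul_succ_eq (j + d) (j + 1)
    rw [show j + d + 1 - (j + 1) = d from by omega] at hB
    have hC := Nat.choose_mul_succ_eq (2 * j + d + 2) (j + 1)
    rw [show 2 * j + d + 2 + 1 - (j + 1) = j + d + 2 from by omega,
        show 2 * j + d + 2 + 1 = 2 * j + d + 3 from by omega] at hC
    have hD := Nat.choose_mul_succ_eq (2 * j + d + 1) (j + 1)
    rw [show 2 * j + d + 1 + 1 - (j + 1) = j + d + 1 from by omega,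
        show 2 * j + d + 1 + 1 = 2 * j + d + 2 from by omega] at hD
    have hE := Nat.choose_succ_right_eq (j + d + 1) j
    rw [show j + d + 1 - j = d + 1 from by omega] at hE
    have hF := Nat.add_one_mul_choose_eq (2 * j + d + 1) j
    try simp only [Nat.succ_eq_add_one] at hF
    rw [show 2 * j + d + 1 + 1 = 2 * j + d + 2 from by omega] at hF
    -- cast to ℝ
    have cA : ((j + d + 1).choose (j + 1) : ℝ) * ((j : ℝ) + d + 2)
        = ((j + d + 2).choose (j + 1) : ℝ) * ((d : ℝ) + 1) := by exact_mod_cast hA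
    have cB : ((j + d).choose (j + 1) : ℝ) * ((j : ℝ) + d + 1)
        = ((j + d + 1).choose (j + 1) : ℝ) * (d : ℝ) := by exact_mod_cast hB
    have cC : ((2 * j + d + 2).choose (j + 1) : ℝ) * (2 * (j : ℝ) + d + 3)
        = ((2 * j + d + 3).choose (j + 1) : ℝ) * ((j : ℝ) + d + 2) := by exact_mod_cast hC
    have cD : ((2 * j + d + 1).choose (j + 1) : ℝ) * (2 * (j : ℝ) + d + 2)
        = ((2 * j + d + 2).choose (j + 1) : ℝ) * ((j : ℝ) + d + 1) := by exact_mod_cast hD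
    have cE : ((j + d + 1).choose (j + 1) : ℝ) * ((j : ℝ) + 1)
        = ((j + d + 1).choose j : ℝ) * ((d : ℝ) + 1) := by exact_mod_cast hE
    have cF : (2 * (j : ℝ) + d + 2) * ((2 * j + d + 1).choose j : ℝ)
        = ((2 * j + d + 2).choose (j + 1) : ℝ) * ((j : ℝ) + 1) := by exact_mod_cast hF
    -- denominators nonzero
    have n1 : ((d : ℝ) + 1) ≠ 0 := by positivity
    have n2 : ((j : ℝ) + d + 2) ≠ 0 := by positivity
    have n3 : ((j : ℝ) + d + 1) ≠ 0 := by positivity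
    have n4 : (2 * (j : ℝ) + d + 2) ≠ 0 := by positivity
    -- division forms
    have e1 : ((j + d + 2).choose (j + 1) : ℝ)
        = ((j : ℝ) + d + 2) * ((j + d + 1).choose (j + 1) : ℝ) / ((d : ℝ) + 1) := by
      rw [eq_div_iff n1]; linarith [cA]
    have e2 : ((2 * j + d + 3).choose (j + 1) : ℝ)
        = (2 * (j : ℝ) + d + 3) * ((2 * j + d + 2).choose (j + 1) : ℝ) / ((j : ℝ) + d + 2) := by
      rw [eq_div_iff n2]; linarith [cC]
    have e3 : ((j + d).choose (j + 1) : ℝ)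
        = (d : ℝ) * ((j + d + 1).choose (j + 1) : ℝ) / ((j : ℝ) + d + 1) := by
      rw [eq_div_iff n3]; linarith [cB]
    have e4 : ((2 * j + d + 1).choose (j + 1) : ℝ)
        = ((j : ℝ) + d + 1) * ((2 * j + d + 2).choose (j + 1) : ℝ) / (2 * (j : ℝ) + d + 2) := by
      rw [eq_div_iff n4]; linarith [cD]
    have e5 : ((j + d + 1).choose j : ℝ)
        = ((j : ℝ) + 1) * ((j + d + 1).choose (j + 1) : ℝ) / ((d : ℝ) + 1) := by
      rw [eq_div_iff n1]; linarith [cE]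
    have e6 : ((2 * j + d + 1).choose j : ℝ)
        = ((j : ℝ) + 1) * ((2 * j + d + 2).choose (j + 1) : ℝ) / (2 * (j : ℝ) + d + 2) := by
      rw [eq_div_iff n4]; linarith [cF]
    simp only [Fr, Br, Hm]
    rw [show j + d + 2 + (j + 1) = 2 * j + d + 3 from by omega,
        show j + d + 1 + (j + 1) = 2 * j + d + 2 from by omega,
        show j + d + (j + 1) = 2 * j + d + 1 from by omega,
        show j + d + 1 + j = 2 * j + d + 1 from by omega]
    rw [e1, e2, e3, e4, e5, e6]
    push_cast
    field_simp
    ring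

lemma apery_rec (M : ℕ) :
    ((M : ℝ) + 2) ^ 3 * (aperyA (M + 2) : ℝ)
      = (34 * ((M : ℝ) + 2) ^ 3 - 51 * ((M : ℝ) + 2) ^ 2 + 27 * ((M : ℝ) + 2) - 5)
          * (aperyA (M + 1) : ℝ)
        - ((M : ℝ) + 1) ^ 3 * (aperyA M : ℝ) := by
  have ext1 : (aperyA (M + 1) : ℝ) = ∑ k ∈ Finset.range (M + 3), Fr (M + 1) k := by
    rw [aperyA_cast]
    refine Finset.sum_subset (Finset.range_subset_range.2 (by omega)) ?_
    intro x hx hnx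
    have hx' : x = M + 2 := by
      simp only [Finset.mem_range] at hx hnx; omega
    subst hx'
    simp [Fr, Nat.choose_eq_zero_of_lt]
  have ext2 : (aperyA M : ℝ) = ∑ k ∈ Finset.range (M + 3), Fr M k := by
    rw [aperyA_cast]
    refine Finset.sum_subset (Finset.range_subset_range.2 (by omega)) ?_
    intro x hx hnx
    have hx' : M < x := by
      simp only [Finset.mem_range] at hx hnx; omega
    simp [Fr, Nat.choose_eq_zero_of_lt hx']
  have tele : ∑ k ∈ Finset.range (M + 3), (Hm (M + 1) (k + 1) - Hm (M + 1) k) = 0 := by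
    rw [Finset.sum_range_sub (Hm (M + 1))]
    have : (M + 1).choose (M + 2) = 0 := Nat.choose_eq_zero_of_lt (by omega)
    simp [Hm, Br, this]
  have sum_eq : ∑ k ∈ Finset.range (M + 3),
      (((M : ℝ) + 2) ^ 3 * Fr (M + 2) k
        - (34 * ((M : ℝ) + 2) ^ 3 - 51 * ((M : ℝ) + 2) ^ 2 + 27 * ((M : ℝ) + 2) - 5)
            * Fr (M + 1) k
        + ((M : ℝ) + 1) ^ 3 * Fr M k) = 0 := by
    rw [Finset.sum_congr rfl (fun k hk => perk M k (by
      simp only [Finset.mem_range] at hk; omega))]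
    exact tele
  simp only [Finset.sum_add_distrib, Finset.sum_sub_distrib, ← Finset.mul_sum] at sum_eq
  rw [aperyA_cast (M + 2), ext1, ext2]
  linarith [sum_eq]

lemma aperyA_le_succ (n : ℕ) : aperyA n ≤ aperyA (n + 1) := by
  unfold aperyA
  calc ∑ k ∈ Finset.range (n + 1), (n.choose k) ^ 2 * ((n + k).choose k) ^ 2
      ≤ ∑ k ∈ Finset.range (n + 1), ((n + 1).choose k) ^ 2 * ((n + 1 + k).choose k) ^ 2 := by
        refine Finset.sum_le_sum fun k _ => ?_
        gcongr <;> omega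
    _ ≤ ∑ k ∈ Finset.range (n + 1 + 1), ((n + 1).choose k) ^ 2 * ((n + 1 + k).choose k) ^ 2 :=
        Finset.sum_le_sum_of_subset (Finset.range_subset_range.2 (by omega))

lemma aperyA_pos (n : ℕ) : 0 < aperyA n := by
  unfold aperyA
  refine Finset.sum_pos' (fun i _ => Nat.zero_le _) ⟨0, Finset.mem_range.2 (by omega), by simp⟩

theorem aperyA_ratio_lower_bound (n : ℕ) (hn : 2 ≤ n) :
    (33 * (n : ℝ) ^ 3 - 48 * (n : ℝ) ^ 2 + 24 * (n : ℝ) - 4) / (n : ℝ) ^ 3 ≤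
      (aperyA n : ℝ) / (aperyA (n - 1) : ℝ) := by
  obtain ⟨M, rfl⟩ : ∃ M, n = M + 2 := ⟨n - 2, by omega⟩
  rw [show M + 2 - 1 = M + 1 from by omega]
  have hrec := apery_rec M
  have hmono : (aperyA M : ℝ) ≤ (aperyA (M + 1) : ℝ) := by
    exact_mod_cast aperyA_le_succ M
  have hp1 : (0 : ℝ) < (aperyA (M + 1) : ℝ) := by exact_mod_cast aperyA_pos (M + 1)
  have hx : (0 : ℝ) < ((M + 2 : ℕ) : ℝ) ^ 3 := by positivity
  rw [div_le_div_iff₀ hx hp1]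
  push_cast
  nlinarith [mul_le_mul_of_nonneg_left hmono (by positivity : (0:ℝ) ≤ ((M : ℝ) + 1) ^ 3), hrec]
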